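/- For the discrete density system y_i' = -(y_i²/ℓ)(v(y_{i+1}) - v(y_i)) (i ≤ N-2) and y_{N-1}' = -(y_{N-1}²/ℓ)(v(0) - v(y_{N-1})), with v C¹ strictly decreasing, the discrete total variation TV(t) = y_0(t) + y_{N-1}(t) + Σ_{i=0}^{N-2} |y_i(t) - y_{i+1}(t)| is non-increasing in time. -/

import Mathlib

open Set Filter Topology

/-- A finite supremum of differentiable functions is nonincreasing provided that,
at every point, every function achieving the supremum has nonpositive derivative. -/
lemma sup'_antitoneOn_aux {ι : Type*} [Fintype ι] [Nonempty ι]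
    (F G : ι → ℝ → ℝ) (a : ℝ)
    (hd : ∀ i, ∀ t, a ≤ t → HasDerivAt (F i) (G i t) t)
    (hle : ∀ t, a ≤ t → ∀ i,
      F i t = Finset.univ.sup' Finset.univ_nonempty (fun j => F j t) → G i t ≤ 0) :
    AntitoneOn (fun t => Finset.univ.sup' Finset.univ_nonempty (fun j => F j t))
      (Set.Ici a) := by
  set M : ℝ → ℝ := fun t => Finset.univ.sup' Finset.univ_nonempty (fun j => F j t) with hM
  intro s hs t ht hst
  have hcont : ContinuousOn M (Icc s t) := by
    intro x hx
    exact (ContinuousAt.finset_sup'_apply _ fun i _ =>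
      (hd i x (le_trans hs hx.1)).continuousAt).continuousWithinAt
  have key : ∀ ⦃x⦄, x ∈ Icc s t → M x ≤ M s := by
    apply image_le_of_liminf_slope_right_le_deriv_boundary (B := fun _ => M s)
      (B' := fun _ => 0) hcont le_rfl continuousOn_const
      (fun x _ => hasDerivWithinAt_const x _ (M s))
    intro x hx r hr
    by_contra hcon
    rw [Filter.not_frequently] at hcon
    have hxa : a ≤ x := le_trans hs hx.1
    -- eventually, M x + r * (z - x) ≤ M z
    have hev : ∀ᶠ z in 𝓝[>] x, ∃ i : ι, M x + r * (z - x) ≤ F i z := by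
      filter_upwards [hcon, self_mem_nhdsWithin] with z hz hz'
      rw [not_lt] at hz
      have hzx : 0 < z - x := sub_pos.2 hz'
      have : M x + r * (z - x) ≤ M z := by
        rw [slope_def_field] at hz
        have h2 := (le_div_iff₀ hzx).1 hz
        linarith
      obtain ⟨i, _, hi⟩ := Finset.exists_mem_eq_sup' Finset.univ_nonempty (fun j => F j z)
      exact ⟨i, by rw [hM] at this ⊢; exact le_of_le_of_eq this hi⟩
    have hfreq : ∃ i : ι, ∃ᶠ z in 𝓝[>] x, M x + r * (z - x) ≤ F i z := by
      by_contra hno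
      push_neg at hno
      have hall : ∀ᶠ z in 𝓝[>] x, ∀ i : ι, ¬ (M x + r * (z - x) ≤ F i z) :=
        Filter.eventually_all.2 fun i => (hno i).mono fun z hz => by simpa using hz
      have : ∀ᶠ z in 𝓝[>] x, False := by
        filter_upwards [hev, hall] with z h1 h2
        obtain ⟨i, hi⟩ := h1
        exact h2 i hi
      exact (nhdsGT_neBot x).ne (Filter.eventually_false_iff_eq_bot.1 this)
    obtain ⟨i, hfreq⟩ := hfreq
    set l := 𝓝[>] x ⊓ 𝓟 {z | M x + r * (z - x) ≤ F i z} with hl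
    haveI hnb : l.NeBot := Filter.frequently_iff_neBot.1 hfreq
    have hll : l ≤ 𝓝[>] x := inf_le_left
    have hev' : ∀ᶠ z in l, M x + r * (z - x) ≤ F i z := by
      rw [hl]
      exact Filter.eventually_inf_principal.2 (Filter.Eventually.of_forall fun z hz => hz)
    have hgt : ∀ᶠ z in l, x < z := hll self_mem_nhdsWithin
    -- `F i` achieves the sup at `x`
    have htend1 : Tendsto (F i) l (𝓝 (F i x)) :=
      ((hd i x hxa).continuousAt.tendsto).mono_left (hll.trans nhdsWithin_le_nhds)
    have htend2 : Tendsto (fun z => M x + r * (z - x)) l (𝓝 (M x)) := by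
      have : Tendsto (fun z : ℝ => M x + r * (z - x)) (𝓝 x) (𝓝 (M x + r * (x - x))) := by
        apply Continuous.tendsto
        continuity
      simpa using this.mono_left (hll.trans nhdsWithin_le_nhds)
    have hMle : M x ≤ F i x := le_of_tendsto_of_tendsto htend2 htend1 hev'
    have hact : F i x = M x :=
      le_antisymm (Finset.le_sup' (fun j => F j x) (Finset.mem_univ i)) hMle
    -- the derivative of `F i` at `x` is at least `r`
    have hslope : Tendsto (slope (F i) x) (𝓝[≠] x) (𝓝 (G i x)) :=
      hasDerivAt_iff_tendsto_slope.1 (hd i x hxa)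
    have hl_ne : l ≤ 𝓝[≠] x :=
      hll.trans (nhdsWithin_mono x fun z hz => ne_of_gt hz)
    have hslopel : Tendsto (slope (F i) x) l (𝓝 (G i x)) := hslope.mono_left hl_ne
    have hsl_ge : ∀ᶠ z in l, r ≤ slope (F i) x z := by
      filter_upwards [hev', hgt] with z h1 h2
      rw [slope_def_field, le_div_iff₀ (sub_pos.2 h2), hact]
      linarith
    have : r ≤ G i x := le_of_tendsto_of_tendsto tendsto_const_nhds hslopel hsl_ge
    have := hle x hxa i hact
    linarith
  exact key ⟨hst, le_rfl⟩

/-- The discrete total variation (including boundary terms) is non-increasing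
along the Lagrangian follow-the-leader dynamics. -/
theorem discrete_total_variation_nonincreasing
    (N : ℕ) (hN : 1 ≤ N) (v : ℝ → ℝ) (ℓ : ℝ)
    (hℓ : 0 < ℓ)
    (hv_smooth : ContDiffOn ℝ 1 v (Set.Ici 0))
    (hv_anti : StrictAntiOn v (Set.Ici 0))
    (y : ℕ → ℝ → ℝ)
    (hpos : ∀ i < N, ∀ t ≥ (0:ℝ), 0 < y i t)
    (hODE_last : ∀ t ≥ (0:ℝ),
      HasDerivAt (y (N - 1))
        (-(y (N - 1) t) ^ 2 / ℓ * (v 0 - v (y (N - 1) t))) t)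
    (hODE : ∀ i, i + 1 < N → ∀ t ≥ (0:ℝ),
      HasDerivAt (y i)
        (-(y i t) ^ 2 / ℓ * (v (y (i + 1) t) - v (y i t))) t) :
    AntitoneOn
      (fun t => y 0 t + y (N - 1) t +
        ∑ i ∈ Finset.range (N - 1), |y i t - y (i + 1) t|)
      (Set.Ici (0:ℝ)) := by
  have hN0 : 0 < N := hN
  have hNsub : N - 1 < N := Nat.sub_lt hN0 one_pos
  have hN1 : N - 1 + 1 = N := Nat.succ_pred_eq_of_pos hN0
  -- sign functions indexed by boolean vectors
  set sgn : (Fin (N - 1) → Bool) → ℕ → ℝ := fun ε i =>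
    if h : i < N - 1 then (if ε ⟨i, h⟩ then 1 else -1) else 1 with hsgn
  have hsgn_cases : ∀ ε i, sgn ε i = 1 ∨ sgn ε i = -1 := by
    intro ε i
    simp only [hsgn]
    split
    · split
      · exact Or.inl rfl
      · exact Or.inr rfl
    · exact Or.inl rfl
  -- extended neighbor and RHS of the ODE
  set z : ℕ → ℝ → ℝ := fun i t => if i + 1 < N then y (i + 1) t else 0 with hz
  set g : ℕ → ℝ → ℝ := fun i t => -(y i t) ^ 2 / ℓ * (v (z i t) - v (y i t)) with hg
  have hy' : ∀ i, i < N → ∀ t : ℝ, 0 ≤ t → HasDerivAt (y i) (g i t) t := by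
    intro i hi t ht
    by_cases h : i + 1 < N
    · simpa [hg, hz, h] using hODE i h t ht
    · have hieq : i = N - 1 := by omega
      subst hieq
      simpa [hg, hz, h] using hODE_last t ht
  have hzpos : ∀ i, i < N → ∀ t : ℝ, 0 ≤ t → 0 ≤ z i t := by
    intro i hi t ht
    simp only [hz]
    split
    · exact (hpos _ (by omega) t ht).le
    · exact le_rfl
  have hvmono : AntitoneOn v (Set.Ici 0) := hv_anti.antitoneOn
  have hfac : ∀ i, ∀ t : ℝ, -(y i t) ^ 2 / ℓ ≤ 0 :=
    fun i t => div_nonpos_iff.2 (Or.inr ⟨neg_nonpos.2 (sq_nonneg _), hℓ.le⟩)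
  have hgsign₁ : ∀ i, i < N → ∀ t : ℝ, 0 ≤ t → z i t ≤ y i t → g i t ≤ 0 := by
    intro i hi t ht hzy
    have hy0 : 0 < y i t := hpos i hi t ht
    have h1 : v (y i t) ≤ v (z i t) := hvmono (hzpos i hi t ht) hy0.le hzy
    have h2 : 0 ≤ v (z i t) - v (y i t) := by linarith
    simp only [hg]
    nlinarith [hfac i t]
  have hgsign₂ : ∀ i, i < N → ∀ t : ℝ, 0 ≤ t → y i t ≤ z i t → 0 ≤ g i t := by
    intro i hi t ht hzy
    have hy0 : 0 < y i t := hpos i hi t ht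
    have h1 : v (z i t) ≤ v (y i t) := hvmono hy0.le (hzpos i hi t ht) hzy
    have h2 : v (z i t) - v (y i t) ≤ 0 := by linarith
    simp only [hg]
    nlinarith [hfac i t]
  -- termwise bound
  have termle : ∀ (ε : Fin (N - 1) → Bool) (t : ℝ), ∀ i ∈ Finset.range (N - 1),
      sgn ε i * (y i t - y (i + 1) t) ≤ |y i t - y (i + 1) t| := by
    intro ε t i _
    rcases hsgn_cases ε i with h | h <;> rw [h]
    · rw [one_mul]; exact le_abs_self _
    · rw [neg_one_mul]; exact neg_le_abs _
  -- the TV equals the sup over sign vectors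
  have eqTV : ∀ t : ℝ,
      y 0 t + y (N - 1) t + ∑ i ∈ Finset.range (N - 1), |y i t - y (i + 1) t|
      = Finset.univ.sup' Finset.univ_nonempty (fun ε : Fin (N - 1) → Bool =>
          y 0 t + y (N - 1) t +
            ∑ i ∈ Finset.range (N - 1), sgn ε i * (y i t - y (i + 1) t)) := by
    intro t
    apply le_antisymm
    · set ε₀ : Fin (N - 1) → Bool := fun j => decide (0 ≤ y j t - y (j + 1) t) with hε₀
      refine le_trans (le_of_eq ?_)
        (Finset.le_sup' (f := fun ε : Fin (N - 1) → Bool =>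
          y 0 t + y (N - 1) t +
            ∑ i ∈ Finset.range (N - 1), sgn ε i * (y i t - y (i + 1) t))
          (Finset.mem_univ ε₀))
      congr 1
      apply Finset.sum_congr rfl
      intro i hi
      have hi' : i < N - 1 := Finset.mem_range.1 hi
      simp only [hsgn, hε₀, dif_pos hi']
      by_cases h : 0 ≤ y i t - y (i + 1) t
      · simp [h, abs_of_nonneg h]
      · rw [if_neg (by simpa using h)]
        rw [abs_of_neg (lt_of_not_ge h)]
        ring
    · apply Finset.sup'_le
      intro ε _
      exact add_le_add_right (Finset.sum_le_sum (termle ε t)) _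
  have main := sup'_antitoneOn_aux
    (F := fun (ε : Fin (N - 1) → Bool) t =>
      y 0 t + y (N - 1) t + ∑ i ∈ Finset.range (N - 1), sgn ε i * (y i t - y (i + 1) t))
    (G := fun (ε : Fin (N - 1) → Bool) t =>
      g 0 t + g (N - 1) t + ∑ i ∈ Finset.range (N - 1), sgn ε i * (g i t - g (i + 1) t))
    (a := 0)
    (by -- derivatives
      intro ε t ht
      have h0 := hy' 0 hN0 t ht
      have hlast := hy' (N - 1) hNsub t ht
      have hsum : HasDerivAt
          (fun u => ∑ i ∈ Finset.range (N - 1), sgn ε i * (y i u - y (i + 1) u))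
          (∑ i ∈ Finset.range (N - 1), sgn ε i * (g i t - g (i + 1) t)) t := by
        apply HasDerivAt.fun_sum
        intro i hi
        have hi' : i < N - 1 := Finset.mem_range.1 hi
        exact ((hy' i (by omega) t ht).sub (hy' (i + 1) (by omega) t ht)).const_mul _
      exact (h0.add hlast).add hsum)
    (by -- nonpositive derivative at active indices
      intro t ht ε hact
      beta_reduce at hact ⊢
      -- termwise equality from activity
      have hsums : ∑ i ∈ Finset.range (N - 1), sgn ε i * (y i t - y (i + 1) t)
          = ∑ i ∈ Finset.range (N - 1), |y i t - y (i + 1) t| := by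
        have h := eqTV t
        rw [← hact] at h
        linarith
      have hterm : ∀ i ∈ Finset.range (N - 1),
          sgn ε i * (y i t - y (i + 1) t) = |y i t - y (i + 1) t| :=
        (Finset.sum_eq_sum_iff_of_le (termle ε t)).1 hsums
      -- regroup the derivative sum with coefficients
      have split : ∑ i ∈ Finset.range (N - 1), sgn ε i * (g i t - g (i + 1) t)
          = (∑ i ∈ Finset.range (N - 1), sgn ε i * g i t)
            - ∑ i ∈ Finset.range (N - 1), sgn ε i * g (i + 1) t := by
        rw [← Finset.sum_sub_distrib]
        exact Finset.sum_congr rfl fun i _ => by ring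
      have h1 : ∑ i ∈ Finset.range N, (if i = 0 then (1:ℝ) else -(sgn ε (i - 1))) * g i t
          = g 0 t - ∑ i ∈ Finset.range (N - 1), sgn ε i * g (i + 1) t := by
        conv_lhs => rw [← hN1, Finset.sum_range_succ']
        have hc : ∀ i ∈ Finset.range (N - 1),
            (if i + 1 = 0 then (1:ℝ) else -(sgn ε (i + 1 - 1))) * g (i + 1) t
            = -(sgn ε i * g (i + 1) t) := by
          intro i _
          rw [if_neg (Nat.succ_ne_zero i), Nat.add_sub_cancel, neg_mul]
        rw [Finset.sum_congr rfl hc, Finset.sum_neg_distrib, if_pos rfl, one_mul]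
        ring
      have h2 : ∑ i ∈ Finset.range N, (if i = N - 1 then (1:ℝ) else sgn ε i) * g i t
          = g (N - 1) t + ∑ i ∈ Finset.range (N - 1), sgn ε i * g i t := by
        conv_lhs => rw [← hN1, Finset.sum_range_succ]
        simp only [Nat.add_sub_cancel]
        have hc : ∀ i ∈ Finset.range (N - 1),
            (if i = N - 1 then (1:ℝ) else sgn ε i) * g i t = sgn ε i * g i t := by
          intro i hi
          rw [if_neg (by have := Finset.mem_range.1 hi; omega)]
        rw [Finset.sum_congr rfl hc]
        norm_num
        ring
      have hAB : ∑ i ∈ Finset.range N,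
            ((if i = 0 then (1:ℝ) else -(sgn ε (i - 1)))
              + (if i = N - 1 then 1 else sgn ε i)) * g i t
          = (∑ i ∈ Finset.range N, (if i = 0 then (1:ℝ) else -(sgn ε (i - 1))) * g i t)
            + ∑ i ∈ Finset.range N, (if i = N - 1 then (1:ℝ) else sgn ε i) * g i t := by
        rw [← Finset.sum_add_distrib]
        exact Finset.sum_congr rfl fun i _ => by ring
      have hnonpos : ∑ i ∈ Finset.range N,
          ((if i = 0 then (1:ℝ) else -(sgn ε (i - 1)))
            + (if i = N - 1 then 1 else sgn ε i)) * g i t ≤ 0 := by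
        apply Finset.sum_nonpos
        intro i hi
        have hiN : i < N := Finset.mem_range.1 hi
        have hA : -1 ≤ (if i = 0 then (1:ℝ) else -(sgn ε (i - 1)))
            ∧ (if i = 0 then (1:ℝ) else -(sgn ε (i - 1))) ≤ 1 := by
          split
          · exact ⟨by norm_num, le_refl 1⟩
          · rcases hsgn_cases ε (i - 1) with h | h <;> rw [h] <;> norm_num
        by_cases hlast : i = N - 1
        · have hgle : g i t ≤ 0 := by
            apply hgsign₁ i hiN t ht
            have : ¬ i + 1 < N := by omega
            simp only [hz, if_neg this]
            exact (hpos i hiN t ht).le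
          rw [if_pos hlast]
          nlinarith [hA.1, hA.2]
        · have hiN1 : i < N - 1 := by omega
          rw [if_neg hlast]
          have hterm_i := hterm i (Finset.mem_range.2 hiN1)
          rcases hsgn_cases ε i with hsi | hsi
          · rw [hsi, one_mul] at hterm_i
            have hd0 : y (i + 1) t ≤ y i t := by
              have := abs_nonneg (y i t - y (i + 1) t)
              rw [← hterm_i] at this
              linarith
            have hgle : g i t ≤ 0 := by
              apply hgsign₁ i hiN t ht
              simp only [hz, if_pos (show i + 1 < N by omega)]
              exact hd0
            rw [hsi]
            nlinarith [hA.1, hA.2]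
          · rw [hsi, neg_one_mul] at hterm_i
            have hd0 : y i t ≤ y (i + 1) t := by
              have := abs_nonneg (y i t - y (i + 1) t)
              rw [← hterm_i] at this
              linarith
            have hgge : 0 ≤ g i t := by
              apply hgsign₂ i hiN t ht
              simp only [hz, if_pos (show i + 1 < N by omega)]
              exact hd0
            rw [hsi]
            nlinarith [hA.1, hA.2]
      linarith [split, h1, h2, hAB, hnonpos])
  intro s hs t ht hst
  have h := main hs ht hst
  simp only at h ⊢
  rw [eqTV s, eqTV t]
  exact h
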